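/- Let A, B ⊆ ℤ be finite nonempty sets and let U ⊆ {x₀, x₁} ⊆ ℤ with x₀ ≠ x₁ and U nonempty. Then |A + B + U| ≥ |U| · |A|^{1/2} · |B|^{1/2}. -/

import Mathlib

open scoped Pointwise

theorem sumset_with_pair_subset
    (A B : Finset ℤ) (hA : A.Nonempty) (hB : B.Nonempty)
    (x₀ x₁ : ℤ) (hx : x₀ ≠ x₁) (U : Finset ℤ) (hU : U ⊆ {x₀, x₁})
    (hUne : U.Nonempty) :
    ((A + B + U).card : ℝ) ≥ U.card * Real.sqrt A.card * Real.sqrt B.card := by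
  have h1 : A.card + B.card - 1 ≤ (A + B).card :=
    cauchy_davenport_add_of_linearOrder_isCancelAdd hA hB
  have h2 : (A + B).card + U.card - 1 ≤ (A + B + U).card :=
    cauchy_davenport_add_of_linearOrder_isCancelAdd (hA.add hB) hUne
  have hUcard : U.card ≤ 2 := by
    calc U.card ≤ ({x₀, x₁} : Finset ℤ).card := Finset.card_le_card hU
    _ ≤ 2 := (Finset.card_insert_le _ _).trans (by simp)
  have hA1 : 1 ≤ A.card := hA.card_pos
  have hB1 : 1 ≤ B.card := hB.card_pos
  have hU1 : 1 ≤ U.card := hUne.card_pos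
  have key : A.card + B.card + U.card - 2 ≤ (A + B + U).card := by omega
  have hkeyR : (A.card : ℝ) + B.card + U.card - 2 ≤ ((A + B + U).card : ℝ) := by
    have h3 : 2 ≤ A.card + B.card + U.card := by omega
    have := (Nat.cast_le (α := ℝ)).2 key
    rw [Nat.cast_sub h3] at this
    push_cast at this
    linarith
  set s := Real.sqrt A.card with hs
  set t := Real.sqrt B.card with ht
  have hs1 : 1 ≤ s := by
    rw [hs, show (1:ℝ) = Real.sqrt 1 by simp]
    exact Real.sqrt_le_sqrt (by exact_mod_cast hA1)
  have ht1 : 1 ≤ t := by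
    rw [ht, show (1:ℝ) = Real.sqrt 1 by simp]
    exact Real.sqrt_le_sqrt (by exact_mod_cast hB1)
  have hs2 : s ^ 2 = A.card := by
    rw [hs, Real.sq_sqrt (by positivity)]
  have ht2 : t ^ 2 = B.card := by
    rw [ht, Real.sq_sqrt (by positivity)]
  have hu1 : (1:ℝ) ≤ U.card := by exact_mod_cast hU1
  have hu2 : (U.card:ℝ) ≤ 2 := by exact_mod_cast hUcard
  nlinarith [sq_nonneg (s - t), mul_nonneg (sub_nonneg.2 hu2)
    (sub_nonneg.2 (one_le_mul_of_one_le_of_one_le hs1 ht1)), hkeyR]
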